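/- Let d ≥ 2. If x ∈ ℝ² satisfies x₁² + x₂² = 1 and each coordinate xᵢ is a dyadic rational (i.e., of the form z/2^k with z ∈ ℤ and k ∈ ℕ), then each xᵢ ∈ {-1, 0, 1}. Consequently there are exactly 4 points with dyadic-rational (in particular, floating-point representable) coordinates on the unit circle S¹. -/

import Mathlib

/-- A real number is a dyadic rational if it has the form `z / 2 ^ k`
with `z : ℤ` and `k : ℕ`. -/
def IsDyadic (x : ℝ) : Prop := ∃ (z : ℤ) (k : ℕ), x = (z : ℝ) / 2 ^ k

lemma dyadic_key : ∀ k : ℕ, ∀ a b : ℤ, a ^ 2 + b ^ 2 = 4 ^ k →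
    (a = 0 ∨ a ^ 2 = 4 ^ k) ∧ (b = 0 ∨ b ^ 2 = 4 ^ k) := by
  intro k
  induction k with
  | zero =>
    intro a b h
    simp only [pow_zero] at *
    constructor
    · rcases eq_or_ne a 0 with h0 | h0
      · exact Or.inl h0
      · right
        have h1 : 0 < a ^ 2 := by positivity
        have h2 : 0 ≤ b ^ 2 := sq_nonneg b
        have h3 : 1 ≤ a ^ 2 := h1
        linarith
    · rcases eq_or_ne b 0 with h0 | h0
      · exact Or.inl h0
      · right
        have h1 : 0 < b ^ 2 := by positivity
        have h2 : 0 ≤ a ^ 2 := sq_nonneg a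
        have h3 : 1 ≤ b ^ 2 := h1
        linarith
  | succ k ih =>
    intro a b h
    have heven : (∃ m, a = 2 * m) ∧ (∃ n, b = 2 * n) := by
      have hcontra : ¬ (Odd a ∨ Odd b) := by
        rintro (⟨m, hm⟩ | ⟨n, hn⟩)
        · rcases Int.even_or_odd b with ⟨n, hn⟩ | ⟨n, hn⟩
          · subst hm hn
            have ht : 4 * (m ^ 2 + n ^ 2 + m) + 1 = 4 * 4 ^ k := by
              linear_combination h - (pow_succ (4:ℤ) k)
            set s : ℤ := 4 ^ k
            omega
          · subst hm hn
            have ht : 4 * (m ^ 2 + n ^ 2 + m + n) + 2 = 4 * 4 ^ k := by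
              linear_combination h - (pow_succ (4:ℤ) k)
            set s : ℤ := 4 ^ k
            omega
        · rcases Int.even_or_odd a with ⟨m, hm⟩ | ⟨m, hm⟩
          · subst hm hn
            have ht : 4 * (m ^ 2 + n ^ 2 + n) + 1 = 4 * 4 ^ k := by
              linear_combination h - (pow_succ (4:ℤ) k)
            set s : ℤ := 4 ^ k
            omega
          · subst hm hn
            have ht : 4 * (m ^ 2 + n ^ 2 + m + n) + 2 = 4 * 4 ^ k := by
              linear_combination h - (pow_succ (4:ℤ) k)
            set s : ℤ := 4 ^ k
            omega
      push_neg at hcontra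
      obtain ⟨ha1, hb1⟩ := hcontra
      rw [Int.not_odd_iff_even] at ha1 hb1
      obtain ⟨m, hm⟩ := ha1
      obtain ⟨n, hn⟩ := hb1
      exact ⟨⟨m, by omega⟩, ⟨n, by omega⟩⟩
    obtain ⟨⟨m, hm⟩, ⟨n, hn⟩⟩ := heven
    subst hm hn
    have h' : m ^ 2 + n ^ 2 = 4 ^ k := by
      have : 4 * (m ^ 2 + n ^ 2) = 4 * 4 ^ k := by
        linear_combination h - (pow_succ (4:ℤ) k)
      linarith
    obtain ⟨ha, hb⟩ := ih m n h'
    constructor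
    · rcases ha with h0 | h0
      · left; omega
      · right; rw [pow_succ]; ring_nf; linarith [h0]
    · rcases hb with h0 | h0
      · left; omega
      · right; rw [pow_succ]; ring_nf; linarith [h0]

lemma dyadic_mem (x : ℝ) (a : ℤ) (k : ℕ) (hx : x = (a : ℝ) / 2 ^ k)
    (h : a = 0 ∨ a ^ 2 = 4 ^ k) : x ∈ ({-1, 0, 1} : Set ℝ) := by
  have h2 : (2 : ℝ) ^ k ≠ 0 := by positivity
  rcases h with h0 | h0
  · subst h0; simp [hx]
  · have h4 : (4 : ℤ) ^ k = (2 ^ k) ^ 2 := by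
      rw [show (4:ℤ) = 2 ^ 2 by norm_num, ← pow_mul, ← pow_mul, Nat.mul_comm]
    rw [h4] at h0
    have : (a - 2 ^ k) * (a + 2 ^ k) = 0 := by linear_combination h0
    rcases mul_eq_zero.mp this with h1 | h1
    · have ha : a = 2 ^ k := by omega
      right; right
      rw [hx, ha]
      push_cast
      field_simp
      exact Set.mem_singleton _
    · have ha : a = -(2 ^ k) := by omega
      left
      rw [hx, ha]
      push_cast
      field_simp

theorem dyadic_points_on_unit_circle :
    (∀ x₁ x₂ : ℝ, IsDyadic x₁ → IsDyadic x₂ → x₁ ^ 2 + x₂ ^ 2 = 1 →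
      x₁ ∈ ({-1, 0, 1} : Set ℝ) ∧ x₂ ∈ ({-1, 0, 1} : Set ℝ)) ∧
    {p : ℝ × ℝ | IsDyadic p.1 ∧ IsDyadic p.2 ∧ p.1 ^ 2 + p.2 ^ 2 = 1}.ncard = 4 := by
  have main : ∀ x₁ x₂ : ℝ, IsDyadic x₁ → IsDyadic x₂ → x₁ ^ 2 + x₂ ^ 2 = 1 →
      x₁ ∈ ({-1, 0, 1} : Set ℝ) ∧ x₂ ∈ ({-1, 0, 1} : Set ℝ) := by
    rintro x₁ x₂ ⟨z₁, k₁, hz₁⟩ ⟨z₂, k₂, hz₂⟩ hcirc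
    set a : ℤ := z₁ * 2 ^ k₂ with ha
    set b : ℤ := z₂ * 2 ^ k₁ with hb
    set k : ℕ := k₁ + k₂ with hk
    have h2 : ∀ n : ℕ, ((2 : ℝ) ^ n) ≠ 0 := fun n => by positivity
    have hx1 : x₁ = (a : ℝ) / 2 ^ k := by
      rw [hz₁, ha, hk]; push_cast; rw [pow_add]; field_simp
    have hx2 : x₂ = (b : ℝ) / 2 ^ k := by
      rw [hz₂, hb, hk]; push_cast; rw [pow_add]; field_simp
    have hint : a ^ 2 + b ^ 2 = 4 ^ k := by
      have hr : ((a : ℝ)) ^ 2 + (b : ℝ) ^ 2 = 4 ^ k := by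
        rw [hx1, hx2] at hcirc
        have h4 : (4 : ℝ) ^ k = (2 ^ k) ^ 2 := by
          rw [show (4:ℝ) = 2 ^ 2 by norm_num, ← pow_mul, ← pow_mul, Nat.mul_comm]
        rw [h4]
        field_simp at hcirc
        linarith
      exact_mod_cast hr
    obtain ⟨hha, hhb⟩ := dyadic_key k a b hint
    exact ⟨dyadic_mem x₁ a k hx1 hha, dyadic_mem x₂ b k hx2 hhb⟩
  refine ⟨main, ?_⟩
  have hset : {p : ℝ × ℝ | IsDyadic p.1 ∧ IsDyadic p.2 ∧ p.1 ^ 2 + p.2 ^ 2 = 1} =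
      {((1:ℝ), (0:ℝ)), (-1, 0), (0, 1), (0, -1)} := by
    ext ⟨p1, p2⟩
    simp only [Set.mem_setOf_eq, Set.mem_insert_iff, Set.mem_singleton_iff, Prod.mk.injEq]
    constructor
    · rintro ⟨hd1, hd2, hc⟩
      obtain ⟨h1, h2⟩ := main p1 p2 hd1 hd2 hc
      simp only [Set.mem_insert_iff, Set.mem_singleton_iff] at h1 h2
      rcases h1 with rfl | rfl | rfl <;> rcases h2 with rfl | rfl | rfl <;> (revert hc; norm_num)
    · have hd0 : IsDyadic 0 := ⟨0, 0, by norm_num⟩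
      have hd1 : IsDyadic 1 := ⟨1, 0, by norm_num⟩
      have hdn1 : IsDyadic (-1) := ⟨-1, 0, by norm_num⟩
      rintro (⟨rfl, rfl⟩ | ⟨rfl, rfl⟩ | ⟨rfl, rfl⟩ | ⟨rfl, rfl⟩) <;>
        exact ⟨by assumption, by assumption, by norm_num⟩
  rw [hset]
  rw [Set.ncard_insert_of_notMem (by norm_num [Prod.ext_iff]),
      Set.ncard_insert_of_notMem (by norm_num [Prod.ext_iff]),
      Set.ncard_insert_of_notMem (by norm_num [Prod.ext_iff]),
      Set.ncard_singleton]
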